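/- Let F : (0,∞) → ℝ be continuously differentiable and bounded, and suppose ∫₀^∞ (F'(r) + (2/r) F(r))² r² dr < ∞. Then ∫₀^∞ (F(r)/r)² r² dr < ∞ and (∫₀^∞ (F(r)/r)² r² dr)^{1/2} ≤ (2/3) (∫₀^∞ (F'(r) + (2/r) F(r))² r² dr)^{1/2}. -/

import Mathlib

open MeasureTheory

/-- The `L²` case of Lemma 2.4 of the paper: a Hardy-type inequality for the radial profile
`F` of a bounded radial function on `ℝ³`, with the weighted measure `r² dr` on `(0, ∞)`. -/
theorem hardy_radial_L2 (F : ℝ → ℝ)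
    (hF : ContDiffOn ℝ 1 F (Set.Ioi 0))
    (hbd : ∃ B : ℝ, ∀ r > (0:ℝ), |F r| ≤ B)
    (hInt : IntegrableOn (fun r => (deriv F r + (2 / r) * F r) ^ 2 * r ^ 2) (Set.Ioi 0)) :
    IntegrableOn (fun r => (F r / r) ^ 2 * r ^ 2) (Set.Ioi 0) ∧
      Real.sqrt (∫ r in Set.Ioi (0:ℝ), (F r / r) ^ 2 * r ^ 2)
        ≤ (2 / 3) * Real.sqrt (∫ r in Set.Ioi (0:ℝ), (deriv F r + (2 / r) * F r) ^ 2 * r ^ 2) := by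
  obtain ⟨B₀, hB₀⟩ := hbd
  set B := max B₀ 0 with hBdef
  have hBnn : (0:ℝ) ≤ B := le_max_right _ _
  have hBbd : ∀ r > (0:ℝ), |F r| ≤ B := fun r hr => (hB₀ r hr).trans (le_max_left _ _)
  set C2 := ∫ r in Set.Ioi (0:ℝ), (deriv F r + (2 / r) * F r) ^ 2 * r ^ 2 with hC2def
  have hC2nn : 0 ≤ C2 := setIntegral_nonneg measurableSet_Ioi (fun r _ => by positivity)
  have hFc : ContinuousOn F (Set.Ioi 0) := hF.continuousOn
  have hF'c : ContinuousOn (deriv F) (Set.Ioi 0) :=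
    hF.continuousOn_deriv_of_isOpen isOpen_Ioi le_rfl
  have hFd : ∀ r ∈ Set.Ioi (0:ℝ), HasDerivAt F (deriv F r) r := by
    intro r hr
    exact ((hF.differentiableOn one_ne_zero).differentiableAt (isOpen_Ioi.mem_nhds hr)).hasDerivAt
  -- the key interval estimate
  have key : ∀ a b : ℝ, 0 < a → a ≤ b →
      (∫ r in a..b, F r ^ 2) ≤ (4/9) * C2 + (2/3) * a * B ^ 2 := by
    intro a b ha hab
    have hsub : Set.uIcc a b ⊆ Set.Ioi 0 := by
      rw [Set.uIcc_of_le hab]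
      intro x hx
      exact lt_of_lt_of_le ha hx.1
    -- continuity of the various integrands on [a,b]
    have hcF2 : ContinuousOn (fun r => F r ^ 2) (Set.uIcc a b) := ((hFc.mono hsub).pow 2)
    have hcD : ContinuousOn (fun r => F r ^ 2 / 2 + r * F r * deriv F r) (Set.uIcc a b) := by
      apply ContinuousOn.add ((hcF2).div_const 2)
      exact ((continuousOn_id.mul (hFc.mono hsub)).mul (hF'c.mono hsub))
    have hcG : ContinuousOn (fun r => (deriv F r + (2 / r) * F r) ^ 2 * r ^ 2)
        (Set.uIcc a b) := by
      apply ContinuousOn.mul _ (continuousOn_pow 2)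
      apply ContinuousOn.pow
      apply (hF'c.mono hsub).add
      apply ContinuousOn.mul _ (hFc.mono hsub)
      exact ContinuousOn.div continuousOn_const continuousOn_id
        (fun x hx => ne_of_gt (hsub hx))
    have hcGF : ContinuousOn (fun r => (deriv F r + (2 / r) * F r) * F r * r)
        (Set.uIcc a b) := by
      apply ContinuousOn.mul _ continuousOn_id
      apply ContinuousOn.mul _ (hFc.mono hsub)
      apply (hF'c.mono hsub).add
      apply ContinuousOn.mul _ (hFc.mono hsub)
      exact ContinuousOn.div continuousOn_const continuousOn_id
        (fun x hx => ne_of_gt (hsub hx))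
    have hiF2 : IntervalIntegrable (fun r => F r ^ 2) volume a b := hcF2.intervalIntegrable
    have hiD : IntervalIntegrable (fun r => F r ^ 2 / 2 + r * F r * deriv F r) volume a b :=
      hcD.intervalIntegrable
    have hiG : IntervalIntegrable (fun r => (deriv F r + (2 / r) * F r) ^ 2 * r ^ 2) volume a b :=
      hcG.intervalIntegrable
    have hiGF : IntervalIntegrable (fun r => (deriv F r + (2 / r) * F r) * F r * r) volume a b :=
      hcGF.intervalIntegrable
    -- fundamental theorem of calculus for r ↦ r * F r ^ 2 / 2
    have hftc : (∫ r in a..b, (F r ^ 2 / 2 + r * F r * deriv F r))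
        = b * F b ^ 2 / 2 - a * F a ^ 2 / 2 := by
      apply intervalIntegral.integral_eq_sub_of_hasDerivAt (f := fun r => r * F r ^ 2 / 2)
      · intro x hx
        have hx0 : x ∈ Set.Ioi (0:ℝ) := hsub hx
        have h1 : HasDerivAt (fun r => r * F r ^ 2)
            (1 * F x ^ 2 + x * (2 * F x ^ 1 * deriv F x)) x :=
          (hasDerivAt_id x).mul ((hFd x hx0).pow 2)
        have h2 := h1.div_const 2
        convert h2 using 1
        · rfl
        ring
      · exact hiD
    -- the integration-by-parts identity
    have hid : (∫ r in a..b, (deriv F r + (2 / r) * F r) * F r * r)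
        = (b * F b ^ 2 / 2 - a * F a ^ 2 / 2) + (3/2) * ∫ r in a..b, F r ^ 2 := by
      have hcongr : Set.EqOn (fun r => (deriv F r + (2 / r) * F r) * F r * r)
          (fun r => (F r ^ 2 / 2 + r * F r * deriv F r) + (3/2) * F r ^ 2) (Set.uIcc a b) := by
        intro r hr
        have hr0 : (0:ℝ) < r := hsub hr
        have hrne : r ≠ 0 := ne_of_gt hr0
        field_simp
        ring
      rw [intervalIntegral.integral_congr hcongr,
        intervalIntegral.integral_add hiD (hiF2.const_mul (3/2)),
        intervalIntegral.integral_const_mul, hftc]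
    -- pointwise AM-GM bound
    have hmono : (∫ r in a..b, (deriv F r + (2 / r) * F r) * F r * r)
        ≤ ∫ r in a..b, ((1/3) * ((deriv F r + (2 / r) * F r) ^ 2 * r ^ 2) + (3/4) * F r ^ 2) := by
      apply intervalIntegral.integral_mono_on hab hiGF
        ((hiG.const_mul (1/3)).add (hiF2.const_mul (3/4)))
      intro r hr
      nlinarith [sq_nonneg (2 * ((deriv F r + (2 / r) * F r) * r) - 3 * F r)]
    have hsplit : (∫ r in a..b, ((1/3) * ((deriv F r + (2 / r) * F r) ^ 2 * r ^ 2)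
        + (3/4) * F r ^ 2))
        = (1/3) * (∫ r in a..b, (deriv F r + (2 / r) * F r) ^ 2 * r ^ 2)
          + (3/4) * ∫ r in a..b, F r ^ 2 := by
      rw [intervalIntegral.integral_add (hiG.const_mul (1/3)) (hiF2.const_mul (3/4)),
        intervalIntegral.integral_const_mul, intervalIntegral.integral_const_mul]
    have hGle : (∫ r in a..b, (deriv F r + (2 / r) * F r) ^ 2 * r ^ 2) ≤ C2 := by
      rw [intervalIntegral.integral_of_le hab]
      apply setIntegral_mono_set hInt (Filter.Eventually.of_forall (fun r => by positivity))
      apply HasSubset.Subset.eventuallyLE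
      intro x hx
      exact lt_trans ha hx.1
    have hha : a * F a ^ 2 / 2 ≤ a * B ^ 2 / 2 := by
      have : F a ^ 2 ≤ B ^ 2 := by
        rw [← sq_abs]
        exact pow_le_pow_left₀ (abs_nonneg _) (hBbd a ha) 2
      nlinarith
    have hhb : 0 ≤ b * F b ^ 2 / 2 := by
      have hb : 0 < b := lt_of_lt_of_le ha hab
      positivity
    nlinarith [hid, hmono, hsplit, hGle, hha, hhb]
  -- integrability of F² on compact subintervals
  have hFint : ∀ a b : ℝ, 0 < a → IntegrableOn (fun r => F r ^ 2) (Set.Ioc a b) := by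
    intro a b ha
    have hsub : Set.Icc a b ⊆ Set.Ioi 0 := fun x hx => lt_of_lt_of_le ha hx.1
    exact (((hFc.mono hsub).pow 2).integrableOn_Icc).mono_set Set.Ioc_subset_Icc_self
  have hnorm : ∀ a b : ℝ, (∫ x in Set.Ioc a b, ‖F x ^ 2‖) = ∫ x in Set.Ioc a b, F x ^ 2 := by
    intro a b
    apply setIntegral_congr_fun measurableSet_Ioc
    intro x _
    simp [abs_of_nonneg (sq_nonneg (F x))]
  -- integrability on (1, ∞)
  have hI1 : IntegrableOn (fun r => F r ^ 2) (Set.Ioi 1) := by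
    apply integrableOn_Ioi_of_intervalIntegral_norm_bounded
      ((4/9) * C2 + (2/3) * 1 * B ^ 2) 1 (fun n : ℕ => hFint 1 n one_pos)
      tendsto_natCast_atTop_atTop
    filter_upwards [Filter.eventually_ge_atTop (1:ℕ)] with n hn
    have h1n : (1:ℝ) ≤ (n:ℝ) := by exact_mod_cast hn
    rw [intervalIntegral.integral_of_le h1n, hnorm, ← intervalIntegral.integral_of_le h1n]
    exact key 1 n one_pos h1n
  -- integrability on (0, 1]
  have hI01 : IntegrableOn (fun r => F r ^ 2) (Set.Ioc 0 1) := by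
    apply integrableOn_Ioc_of_intervalIntegral_norm_bounded_left
      (I := (4/9) * C2 + (2/3) * 1 * B ^ 2) (a := fun n : ℕ => 1 / (n + 1))
      (fun n : ℕ => hFint (1 / (n + 1)) 1 (by positivity))
      tendsto_one_div_add_atTop_nhds_zero_nat
    filter_upwards with n
    have han : (0:ℝ) < 1 / (n + 1) := by positivity
    have han1 : (1:ℝ) / (n + 1) ≤ 1 := by
      rw [div_le_one (by positivity)]
      simp
    rw [hnorm, ← intervalIntegral.integral_of_le han1]
    refine (key _ 1 han han1).trans ?_
    nlinarith
  have hIoi : IntegrableOn (fun r => F r ^ 2) (Set.Ioi 0) := by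
    rw [← Set.Ioc_union_Ioi_eq_Ioi (zero_le_one (α := ℝ))]
    exact hI01.union hI1
  -- the bound on the full integral
  have hbound : (∫ r in Set.Ioi (0:ℝ), F r ^ 2) ≤ (4/9) * C2 := by
    set s : ℕ → Set ℝ := fun n => Set.Ioc (1 / (n + 1)) (n + 1) with hsdef
    have hsm : ∀ n, MeasurableSet (s n) := fun n => measurableSet_Ioc
    have hmono : Monotone s := by
      intro m n hmn
      apply Set.Ioc_subset_Ioc
      · apply one_div_le_one_div_of_le (by positivity)
        have : (m:ℝ) ≤ n := by exact_mod_cast hmn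
        linarith
      · have : (m:ℝ) ≤ n := by exact_mod_cast hmn
        linarith
    have hun : (⋃ n, s n) = Set.Ioi 0 := by
      ext x
      simp only [hsdef, Set.mem_iUnion, Set.mem_Ioc, Set.mem_Ioi]
      constructor
      · rintro ⟨n, h1, _⟩
        have : (0:ℝ) < 1 / (n + 1) := by positivity
        linarith
      · intro hx
        obtain ⟨n, hn⟩ := exists_nat_gt (max (1 / x) x)
        have hn1 : 1 / x < (n:ℝ) := lt_of_le_of_lt (le_max_left _ _) hn
        have hn2 : x < (n:ℝ) := lt_of_le_of_lt (le_max_right _ _) hn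
        refine ⟨n, ?_, by linarith⟩
        rw [div_lt_iff₀ (by positivity)]
        rw [div_lt_iff₀ hx] at hn1
        nlinarith
    have ht := tendsto_setIntegral_of_monotone hsm hmono (hun ▸ hIoi)
    rw [hun] at ht
    have hle : ∀ n : ℕ, (∫ x in s n, F x ^ 2)
        ≤ (4/9) * C2 + (2/3) * (1 / (n + 1)) * B ^ 2 := by
      intro n
      have han : (0:ℝ) < 1 / (n + 1) := by positivity
      have hab : (1:ℝ) / (n + 1) ≤ n + 1 := by
        rw [div_le_iff₀ (by positivity)]
        nlinarith [Nat.cast_nonneg (α := ℝ) n]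
      rw [hsdef, ← intervalIntegral.integral_of_le hab]
      exact key _ _ han hab
    have hrhs : Filter.Tendsto (fun n : ℕ => (4/9) * C2 + (2/3) * (1 / (n + 1)) * B ^ 2)
        Filter.atTop (nhds ((4/9) * C2)) := by
      have h0 : Filter.Tendsto (fun n : ℕ => (2/3) * (1 / ((n:ℝ) + 1)) * B ^ 2)
          Filter.atTop (nhds ((2/3) * 0 * B ^ 2)) :=
        (tendsto_one_div_add_atTop_nhds_zero_nat.const_mul (2/3)).mul_const (B ^ 2)
      have := Filter.Tendsto.add (tendsto_const_nhds (x := (4/9) * C2)) h0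
      simpa using this
    exact le_of_tendsto_of_tendsto' ht hrhs hle
  -- rewrite (F r / r)² r² as F r² on (0, ∞)
  have hcongr : Set.EqOn (fun r => (F r / r) ^ 2 * r ^ 2) (fun r => F r ^ 2) (Set.Ioi 0) := by
    intro r hr
    have hrne : r ≠ 0 := ne_of_gt hr
    field_simp
  constructor
  · exact hIoi.congr_fun (fun r hr => (hcongr hr).symm) measurableSet_Ioi
  · rw [setIntegral_congr_fun measurableSet_Ioi hcongr]
    calc Real.sqrt (∫ r in Set.Ioi (0:ℝ), F r ^ 2)
        ≤ Real.sqrt ((4/9) * C2) := Real.sqrt_le_sqrt hbound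
      _ = (2/3) * Real.sqrt C2 := by
          rw [show (4:ℝ)/9 = (2/3)^2 by norm_num, Real.sqrt_mul (sq_nonneg _),
            Real.sqrt_sq (by norm_num : (0:ℝ) ≤ 2/3)]
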